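/- Let F be a free R-module, s ≥ 1, a_2 ∈ ⋀^2 F, and β_s ∈ ⋀^s F* with Δ(β_s) = Σ_i β_1^[i] ⊗ β_{s−1}^[i]. Then Σ_i (β_1^[i] ⌟ a_2) ⌟ β_{s−1}^[i] = −2 · (a_2 ⌟ β_s). -/

import Mathlib

open ExteriorAlgebra

noncomputable def extMap (R : Type*) [CommRing R] {M N : Type*} [AddCommGroup M] [AddCommGroup N]
    [Module R M] [Module R N] (f : M →ₗ[R] N) :
    ExteriorAlgebra R M →ₐ[R] ExteriorAlgebra R N :=
  ExteriorAlgebra.lift R ⟨(ExteriorAlgebra.ι R).comp f, fun m => by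
    simp [ExteriorAlgebra.ι_sq_zero (f m)]⟩

noncomputable def extContract (R : Type*) [CommRing R] {M : Type*} [AddCommGroup M] [Module R M] :
    ExteriorAlgebra R (Module.Dual R M) →ₐ[R] Module.End R (ExteriorAlgebra R M) :=
  ExteriorAlgebra.lift R ⟨(CliffordAlgebra.contractLeft (Q := (0 : QuadraticForm R M)) :
      Module.Dual R M →ₗ[R] Module.End R (ExteriorAlgebra R M)), fun d => by
    refine LinearMap.ext fun x => ?_
    rw [Module.End.mul_apply, LinearMap.zero_apply]
    exact CliffordAlgebra.contractLeft_contractLeft (Q := (0 : QuadraticForm R M)) (d := d) x⟩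

noncomputable def extContractD (R : Type*) [CommRing R] {M : Type*} [AddCommGroup M] [Module R M] :
    ExteriorAlgebra R M →ₐ[R] Module.End R (ExteriorAlgebra R (Module.Dual R M)) :=
  ExteriorAlgebra.lift R ⟨(CliffordAlgebra.contractLeft
      (Q := (0 : QuadraticForm R (Module.Dual R M))) :
      Module.Dual R (Module.Dual R M) →ₗ[R] _).comp (Module.Dual.eval R M), fun m => by
    refine LinearMap.ext fun x => ?_
    rw [Module.End.mul_apply, LinearMap.zero_apply, LinearMap.comp_apply]
    exact CliffordAlgebra.contractLeft_contractLeft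
      (Q := (0 : QuadraticForm R (Module.Dual R M))) (d := Module.Dual.eval R M m) x⟩

def extDeg (R : Type*) [CommRing R] {M : Type*} [AddCommGroup M] [Module R M] (i : ℕ)
    (x : ExteriorAlgebra R M) : Prop :=
  x ∈ (LinearMap.range (ExteriorAlgebra.ι R : M →ₗ[R] ExteriorAlgebra R M)) ^ i

set_option maxHeartbeats 1000000 in
/-- Lemma 1.5(b).  The hypothesis `hΔ` encodes `Δ(β_s) = Σ_i β_1^[i] ⊗ β_{s-1}^[i]`
(the `(1, s-1)` component of the comultiplication) via its characterizing property.
The conclusion is `Σ_i (β_1^[i] ⌟ a_2) ⌟ β_{s-1}^[i] = -2 • (a_2 ⌟ β_s)`. -/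
theorem comul_contract_two (R : Type*) [CommRing R]
    (F : Type*) [AddCommGroup F] [Module R F] [Module.Free R F] [Module.Finite R F]
    (s : ℕ) (hs : 1 ≤ s)
    (a2 : ExteriorAlgebra R F) (ha2 : extDeg R 2 a2)
    (βs : ExteriorAlgebra R (Module.Dual R F)) (hβs : extDeg R s βs)
    (I : Type*) [Fintype I] (β1 : I → Module.Dual R F)
    (βs1 : I → ExteriorAlgebra R (Module.Dual R F))
    (hβs1 : ∀ i, extDeg R (s - 1) (βs1 i))
    (hΔ : ∀ b : F, extContractD R (ExteriorAlgebra.ι R b) βs =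
      ∑ i, (β1 i b) • βs1 i) :
    ∑ i, extContractD R (extContract R (ExteriorAlgebra.ι R (β1 i)) a2) (βs1 i) =
      (-2 : R) • extContractD R a2 βs := by
  have hcontr : ∀ d : Module.Dual R F, extContract R (ExteriorAlgebra.ι R d) =
      CliffordAlgebra.contractLeft (Q := (0 : QuadraticForm R F)) d := fun d => by
    simp [extContract, ExteriorAlgebra.lift_ι_apply]
  have hD : ∀ x : F, extContractD R (ExteriorAlgebra.ι R x) =
      CliffordAlgebra.contractLeft (Q := (0 : QuadraticForm R (Module.Dual R F)))
        (Module.Dual.eval R F x) := fun x => by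
    simp [extContractD, ExteriorAlgebra.lift_ι_apply]
  have key : ∀ b c : F,
      ∑ i, extContractD R (extContract R (ExteriorAlgebra.ι R (β1 i))
          (ExteriorAlgebra.ι R b * ExteriorAlgebra.ι R c)) (βs1 i) =
        (-2 : R) • extContractD R (ExteriorAlgebra.ι R b * ExteriorAlgebra.ι R c) βs := by
    intro b c
    have h1 : ∀ d : Module.Dual R F,
        extContract R (ExteriorAlgebra.ι R d) (ExteriorAlgebra.ι R b * ExteriorAlgebra.ι R c) =
        d b • ExteriorAlgebra.ι R c - d c • ExteriorAlgebra.ι R b := by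
      intro d
      rw [hcontr, CliffordAlgebra.contractLeft_ι_mul, CliffordAlgebra.contractLeft_ι,
        ← Algebra.commutes, ← Algebra.smul_def]
    have hlin : ∀ i, extContract R (ExteriorAlgebra.ι R (β1 i))
        (ExteriorAlgebra.ι R b * ExteriorAlgebra.ι R c) =
        β1 i b • ExteriorAlgebra.ι R c - β1 i c • ExteriorAlgebra.ι R b := fun i => h1 (β1 i)
    calc ∑ i, extContractD R (extContract R (ExteriorAlgebra.ι R (β1 i))
          (ExteriorAlgebra.ι R b * ExteriorAlgebra.ι R c)) (βs1 i)
        = ∑ i, (β1 i b • (extContractD R (ExteriorAlgebra.ι R c)) (βs1 i)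
            - β1 i c • (extContractD R (ExteriorAlgebra.ι R b)) (βs1 i)) := by
          refine Finset.sum_congr rfl fun i _ => ?_
          rw [hlin i, map_sub, map_smul, map_smul, LinearMap.sub_apply,
            LinearMap.smul_apply, LinearMap.smul_apply]
      _ = extContractD R (ExteriorAlgebra.ι R c) (∑ i, β1 i b • βs1 i)
            - extContractD R (ExteriorAlgebra.ι R b) (∑ i, β1 i c • βs1 i) := by
          rw [Finset.sum_sub_distrib, map_sum, map_sum]
          simp only [map_smul]
      _ = extContractD R (ExteriorAlgebra.ι R c) (extContractD R (ExteriorAlgebra.ι R b) βs)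
            - extContractD R (ExteriorAlgebra.ι R b) (extContractD R (ExteriorAlgebra.ι R c) βs) := by
          rw [hΔ b, hΔ c]
      _ = (-2 : R) • extContractD R (ExteriorAlgebra.ι R b)
            (extContractD R (ExteriorAlgebra.ι R c) βs) := by
          rw [hD b, hD c, CliffordAlgebra.contractLeft_comm]
          module
      _ = (-2 : R) • extContractD R (ExteriorAlgebra.ι R b * ExteriorAlgebra.ι R c) βs := by
          rw [map_mul, Module.End.mul_apply]
  have ha2' : a2 ∈ LinearMap.range (ExteriorAlgebra.ι R : F →ₗ[R] ExteriorAlgebra R F) *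
      LinearMap.range (ExteriorAlgebra.ι R : F →ₗ[R] ExteriorAlgebra R F) := by
    rw [← pow_two]; exact ha2
  refine Submodule.mul_induction_on ha2' ?_ ?_
  · rintro m ⟨b, rfl⟩ n ⟨c, rfl⟩
    exact key b c
  · intro x y hx hy
    simp only [map_add, LinearMap.add_apply, Finset.sum_add_distrib, hx, hy, smul_add]
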